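/- Let m ≥ 3 and n ∈ ℕ. Then B_n(c_1, c_2, …, c_n) = n! · p'_m(n), where c_j = (j-1)! · σ'_m(j), σ'_m(j) is the sum of divisors of j congruent to 0, 1, or m-1 mod m, p'_m(n) is the number of partitions of n into parts congruent to 0, 1, or m-1 mod m, and B_n is the n-th complete Bell polynomial. -/

import Mathlib

/-- Partial (exponential) Bell polynomials, via the standard recurrence
`B_{n+1,k+1} = ∑_{i=0}^{n} C(n,i) x_{i+1} B_{n-i,k}`. -/
def bellPartial (x : ℕ → ℚ) : ℕ → ℕ → ℚ
  | 0, 0 => 1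
  | 0, _ + 1 => 0
  | _ + 1, 0 => 0
  | n + 1, k + 1 =>
      ∑ i ∈ Finset.range (n + 1), (n.choose i : ℚ) * x (i + 1) * bellPartial x (n - i) k
  termination_by n _ => n
  decreasing_by omega

/-- The `n`-th complete Bell polynomial `B_n = ∑_{k=1}^{n} B_{n,k}` (with `B_0 = 1`). -/
def bellComplete (x : ℕ → ℚ) (n : ℕ) : ℚ :=
  if n = 0 then 1 else ∑ k ∈ Finset.Icc 1 n, bellPartial x n k



lemma sum_Icc_one_eq_range (f : ℕ → ℚ) (N : ℕ) :
    ∑ k ∈ Finset.Icc 1 N, f k = ∑ i ∈ Finset.range N, f (1 + i) := by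
  rw [← Finset.Ico_add_one_right_eq_Icc, Finset.sum_Ico_eq_sum_range]
  simp

lemma bellPartial_zero_right (x : ℕ → ℚ) (n : ℕ) :
    bellPartial x n 0 = if n = 0 then 1 else 0 := by
  cases n <;> simp [bellPartial]

lemma bellPartial_eq_zero (x : ℕ → ℚ) : ∀ n k, n < k → bellPartial x n k = 0 := by
  intro n
  induction n using Nat.strong_induction_on with
  | _ n ih =>
    intro k hk
    match n, k with
    | 0, k + 1 => simp [bellPartial]
    | n + 1, k + 1 =>
      rw [bellPartial]
      apply Finset.sum_eq_zero
      intro i hi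
      rw [ih (n - i) (by omega) k (by omega), mul_zero]

lemma sum_range_bellPartial (x : ℕ → ℚ) (r N : ℕ) (h : r ≤ N) :
    ∑ k ∈ Finset.range (N + 1), bellPartial x r k = bellComplete x r := by
  rw [Finset.sum_range_succ', bellPartial_zero_right]
  rcases Nat.eq_zero_or_pos r with hr | hr
  · subst hr
    rw [if_pos rfl]
    have : ∀ i ∈ Finset.range N, bellPartial x 0 (i + 1) = 0 := fun i _ =>
      bellPartial_eq_zero x 0 (i + 1) (Nat.succ_pos i)
    rw [Finset.sum_congr rfl this, Finset.sum_const_zero]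
    simp [bellComplete]
  · rw [if_neg (by omega), add_zero, bellComplete, if_neg (by omega)]
    have hsub : ∑ k ∈ Finset.Icc 1 N, bellPartial x r k
        = ∑ k ∈ Finset.Icc 1 r, bellPartial x r k := by
      refine (Finset.sum_subset (Finset.Icc_subset_Icc_right h) ?_).symm
      intro k hk hk'
      simp only [Finset.mem_Icc] at hk hk'
      exact bellPartial_eq_zero x r k (by omega)
    rw [← hsub, sum_Icc_one_eq_range (fun k => bellPartial x r k) N]
    exact Finset.sum_congr rfl fun i _ => by rw [Nat.add_comm 1 i]

lemma bellComplete_rec (x : ℕ → ℚ) (n : ℕ) :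
    bellComplete x (n + 1) =
      ∑ i ∈ Finset.range (n + 1), (n.choose i : ℚ) * x (i + 1) * bellComplete x (n - i) := by
  have h1 : bellComplete x (n + 1) = ∑ k ∈ Finset.range (n + 1), bellPartial x (n + 1) (k + 1) := by
    rw [bellComplete, if_neg (Nat.succ_ne_zero n),
      sum_Icc_one_eq_range (fun k => bellPartial x (n+1) k) (n+1)]
    exact Finset.sum_congr rfl fun i _ => by rw [Nat.add_comm 1 i]
  rw [h1]
  simp only [bellPartial]
  rw [Finset.sum_comm]
  apply Finset.sum_congr rfl
  intro i hi
  rw [Finset.mem_range] at hi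
  rw [← Finset.mul_sum]
  congr 1
  exact sum_range_bellPartial x (n - i) n (by omega)

/-- `σ'_m(n)`: the sum of divisors of `n` congruent to 0, 1, or m-1 (mod m). -/
def sigma' (m n : ℕ) : ℕ :=
  ∑ d ∈ n.divisors, if d % m = 0 ∨ d % m = 1 ∨ d % m = m - 1 then d else 0

/-- Generalized `(m+2)`-gonal number `P_{m+2,k} = k(mk-(m-2))/2` as an integer. -/
def polyZ (m : ℕ) (k : ℤ) : ℤ := k * ((m : ℤ) * k - ((m : ℤ) - 2)) / 2

/-- Generalized `(m+2)`-gonal number `Q_{m+2,k} = k(mk+(m-2))/2` as an integer. -/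
def polyQZ (m : ℕ) (k : ℤ) : ℤ := k * ((m : ℤ) * k + ((m : ℤ) - 2)) / 2

/-- Number of partitions of `n` all of whose parts satisfy `P`. -/
def restrictedPartitionCount (P : ℕ → Prop) [DecidablePred P] (n : ℕ) : ℕ :=
  Fintype.card {p : Nat.Partition n // ∀ i ∈ p.parts, P i}



section
variable (P : ℕ → Prop) [DecidablePred P]

lemma card_shift (n d k : ℕ) (hd : 0 < d) (hPd : P d) :
    Fintype.card {p : (n + d * k).Partition // (∀ i ∈ p.parts, P i) ∧ k ≤ p.parts.count d}
      = restrictedPartitionCount P n := by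
  apply Fintype.card_congr
  refine ⟨fun p => ⟨⟨p.1.parts - Multiset.replicate k d, ?_, ?_⟩, ?_⟩,
    fun q => ⟨⟨q.1.parts + Multiset.replicate k d, ?_, ?_⟩, ?_, ?_⟩, ?_, ?_⟩
  · intro i hi
    exact p.1.parts_pos (Multiset.mem_of_le (tsub_le_self) hi)
  · have hrep : Multiset.replicate k d ≤ p.1.parts :=
      Multiset.le_count_iff_replicate_le.mp p.2.2
    have h1 : (p.1.parts - Multiset.replicate k d) + Multiset.replicate k d = p.1.parts :=
      tsub_add_cancel_of_le hrep
    have h2 := congrArg Multiset.sum h1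
    rw [Multiset.sum_add, Multiset.sum_replicate, smul_eq_mul] at h2
    have h3 := p.1.parts_sum
    have h4 : d * k = k * d := Nat.mul_comm d k
    omega
  · intro i hi
    exact p.2.1 i (Multiset.mem_of_le (tsub_le_self) hi)
  · intro i hi
    rcases Multiset.mem_add.mp hi with h | h
    · exact q.1.parts_pos h
    · rw [Multiset.eq_of_mem_replicate h]; exact hd
  · rw [Multiset.sum_add, Multiset.sum_replicate, smul_eq_mul, q.1.parts_sum]
    ring
  · intro i hi
    rcases Multiset.mem_add.mp hi with h | h
    · exact q.2 i h
    · rw [Multiset.eq_of_mem_replicate h]; exact hPd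
  · rw [Multiset.count_add, Multiset.count_replicate, if_pos rfl]
    omega
  · intro p
    apply Subtype.ext
    apply Nat.Partition.ext
    exact tsub_add_cancel_of_le (Multiset.le_count_iff_replicate_le.mp p.2.2)
  · intro q
    apply Subtype.ext
    apply Nat.Partition.ext
    exact add_tsub_cancel_right _ _

lemma card_shift_zero (n d k : ℕ) (hlt : n < d * k) :
    Fintype.card {p : n.Partition // (∀ i ∈ p.parts, P i) ∧ k ≤ p.parts.count d} = 0 := by
  rw [Fintype.card_eq_zero_iff]
  constructor
  rintro ⟨p, _, hcount⟩
  have hrep : Multiset.replicate k d ≤ p.parts :=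
    Multiset.le_count_iff_replicate_le.mp hcount
  obtain ⟨u, hu⟩ := Multiset.le_iff_exists_add.mp hrep
  have h2 := p.parts_sum
  rw [hu, Multiset.sum_add, Multiset.sum_replicate, smul_eq_mul] at h2
  have : d * k = k * d := Nat.mul_comm d k
  omega

lemma card_count_ge (n d k : ℕ) (hd : 0 < d) (hPd : P d) :
    Fintype.card {p : n.Partition // (∀ i ∈ p.parts, P i) ∧ k ≤ p.parts.count d}
      = if d * k ≤ n then restrictedPartitionCount P (n - d * k) else 0 := by
  split_ifs with h
  · have := card_shift P (n - d * k) d k hd hPd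
    rwa [Nat.sub_add_cancel h] at this
  · exact card_shift_zero P n d k (by omega)

end

section
variable (P : ℕ → Prop) [DecidablePred P]

lemma parts_sum_expand (n : ℕ) (p : n.Partition) :
    n = ∑ d ∈ Finset.Icc 1 n, d * p.parts.count d := by
  have h := Finset.sum_multiset_map_count p.parts (id : ℕ → ℕ)
  rw [Multiset.map_id] at h
  have hsub : p.parts.toFinset ⊆ Finset.Icc 1 n := by
    intro i hi
    rw [Multiset.mem_toFinset] at hi
    rw [Finset.mem_Icc]
    refine ⟨p.parts_pos hi, ?_⟩
    rw [← p.parts_sum]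
    exact Multiset.single_le_sum (fun x _ => Nat.zero_le x) i hi
  conv_lhs => rw [← p.parts_sum]
  calc p.parts.sum = ∑ m ∈ p.parts.toFinset, m * p.parts.count m := by
        rw [h]; exact Finset.sum_congr rfl fun i _ => by rw [smul_eq_mul, id, mul_comm]
    _ = ∑ d ∈ Finset.Icc 1 n, d * p.parts.count d := by
        refine Finset.sum_subset hsub fun i _ hi => ?_
        rw [Multiset.count_eq_zero_of_notMem (fun hm => hi (Multiset.mem_toFinset.mpr hm))]
        simp

lemma card_ge_eq (n d k : ℕ) :
    (∑ p : {p : n.Partition // ∀ i ∈ p.parts, P i},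
        (if k ≤ p.1.parts.count d then 1 else 0))
      = Fintype.card {p : n.Partition // (∀ i ∈ p.parts, P i) ∧ k ≤ p.parts.count d} := by
  rw [Finset.sum_boole, Nat.cast_id,
    ← Fintype.card_subtype (p := fun p : {p : n.Partition // ∀ i ∈ p.parts, P i} =>
        k ≤ p.1.parts.count d)]
  exact Fintype.card_congr (Equiv.subtypeSubtypeEquivSubtypeInter
    (fun p : n.Partition => ∀ i ∈ p.parts, P i) (fun p => k ≤ p.parts.count d))

lemma count_le_n (n d : ℕ) (hd : 1 ≤ d) (p : n.Partition) : p.parts.count d ≤ n := by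
  have hrep : Multiset.replicate (p.parts.count d) d ≤ p.parts :=
    Multiset.le_count_iff_replicate_le.mp le_rfl
  obtain ⟨u, hu⟩ := Multiset.le_iff_exists_add.mp hrep
  have h2 := p.parts_sum
  rw [hu, Multiset.sum_add, Multiset.sum_replicate, smul_eq_mul] at h2
  have h5 : p.parts.count d ≤ p.parts.count d * d := Nat.le_mul_of_pos_right _ hd
  omega

lemma count_expand (n c d : ℕ) (hc : c ≤ n) :
    c = ∑ k ∈ Finset.Icc 1 n, (if k ≤ c then 1 else 0) := by
  rw [Finset.sum_boole, Nat.cast_id]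
  have hf : (Finset.Icc 1 n).filter (fun k => k ≤ c) = Finset.Icc 1 c := by
    ext k
    simp only [Finset.mem_filter, Finset.mem_Icc]
    omega
  rw [hf, Nat.card_Icc]
  omega

lemma partition_recurrence (n : ℕ) :
    n * restrictedPartitionCount P n
      = ∑ j ∈ Finset.Icc 1 n, (∑ d ∈ j.divisors, if P d then d else 0)
          * restrictedPartitionCount P (n - j) := by
  classical
  -- Step A+B
  have hA : n * restrictedPartitionCount P n
      = ∑ p : {p : n.Partition // ∀ i ∈ p.parts, P i},
          ∑ d ∈ Finset.Icc 1 n, d * p.1.parts.count d := by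
    calc n * restrictedPartitionCount P n
        = ∑ _p : {p : n.Partition // ∀ i ∈ p.parts, P i}, n := by
          rw [Finset.sum_const, Finset.card_univ, smul_eq_mul, mul_comm,
            restrictedPartitionCount]
      _ = _ := Finset.sum_congr rfl fun p _ => parts_sum_expand n p.1
  rw [hA, Finset.sum_comm]
  have hcount : ∀ d ∈ Finset.Icc 1 n,
      (∑ p : {p : n.Partition // ∀ i ∈ p.parts, P i}, d * p.1.parts.count d)
        = (if P d then d else 0) * ∑ k ∈ Finset.Icc 1 n,
            (if d * k ≤ n then restrictedPartitionCount P (n - d * k) else 0) := by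
    intro d hd
    rw [Finset.mem_Icc] at hd
    rw [← Finset.mul_sum]
    by_cases hPd : P d
    · rw [if_pos hPd]
      congr 1
      have hexp : ∀ p : {p : n.Partition // ∀ i ∈ p.parts, P i}, p.1.parts.count d
          = ∑ k ∈ Finset.Icc 1 n, (if k ≤ p.1.parts.count d then 1 else 0) :=
        fun p => count_expand n _ d (count_le_n n d hd.1 p.1)
      rw [Finset.sum_congr rfl (fun p _ => hexp p), Finset.sum_comm]
      refine Finset.sum_congr rfl fun k _ => ?_
      rw [card_ge_eq P n d k, card_count_ge P n d k hd.1 hPd]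
    · have hz : (∑ p : {p : n.Partition // ∀ i ∈ p.parts, P i}, p.1.parts.count d) = 0 :=
        Finset.sum_eq_zero fun p _ =>
          Multiset.count_eq_zero_of_notMem (fun hm => hPd (p.2 d hm))
      rw [hz, mul_zero, if_neg hPd, zero_mul]
  rw [Finset.sum_congr rfl hcount]
  have hL : (∑ d ∈ Finset.Icc 1 n, (if P d then d else 0) * ∑ k ∈ Finset.Icc 1 n,
        (if d * k ≤ n then restrictedPartitionCount P (n - d * k) else 0))
      = ∑ q ∈ ((Finset.Icc 1 n) ×ˢ (Finset.Icc 1 n)).filter (fun q => q.1 * q.2 ≤ n),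
          (if P q.1 then q.1 else 0) * restrictedPartitionCount P (n - q.1 * q.2) := by
    rw [Finset.sum_filter, Finset.sum_product]
    refine Finset.sum_congr rfl fun d _ => ?_
    rw [Finset.mul_sum]
    refine Finset.sum_congr rfl fun k _ => ?_
    split_ifs <;> simp
  have hR : (∑ j ∈ Finset.Icc 1 n, (∑ d ∈ j.divisors, if P d then d else 0)
          * restrictedPartitionCount P (n - j))
      = ∑ σ ∈ (Finset.Icc 1 n).sigma (fun j => j.divisors),
          (if P σ.2 then σ.2 else 0) * restrictedPartitionCount P (n - σ.1) := by
    rw [Finset.sum_sigma]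
    refine Finset.sum_congr rfl fun j _ => ?_
    rw [Finset.sum_mul]
  rw [hL, hR]
  refine Finset.sum_nbij' (fun q => ⟨q.1 * q.2, q.1⟩) (fun σ => (σ.2, σ.1 / σ.2)) ?_ ?_ ?_ ?_ ?_
  · intro q hq
    simp only [Finset.mem_filter, Finset.mem_product, Finset.mem_Icc] at hq
    simp only [Finset.mem_sigma, Finset.mem_Icc, Nat.mem_divisors]
    have hpos : 0 < q.1 * q.2 := Nat.mul_pos hq.1.1.1 hq.1.2.1
    exact ⟨⟨hpos, hq.2⟩, dvd_mul_right _ _, by omega⟩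
  · intro σ hσ
    simp only [Finset.mem_sigma, Finset.mem_Icc, Nat.mem_divisors] at hσ
    obtain ⟨⟨h1, h2⟩, hdvd, hne⟩ := hσ
    have hd0 : 0 < σ.2 := Nat.pos_of_dvd_of_pos hdvd (by omega)
    have hle : σ.2 ≤ σ.1 := Nat.le_of_dvd (by omega) hdvd
    have hq : σ.2 * (σ.1 / σ.2) = σ.1 := Nat.mul_div_cancel' hdvd
    have hdiv_pos : 0 < σ.1 / σ.2 := Nat.div_pos hle hd0
    have hdle : σ.1 / σ.2 ≤ σ.1 := Nat.div_le_self _ _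
    simp only [Finset.mem_filter, Finset.mem_product, Finset.mem_Icc]
    refine ⟨⟨⟨hd0, by omega⟩, ⟨hdiv_pos, by omega⟩⟩, ?_⟩
    rw [hq]; omega
  · intro q hq
    simp only [Finset.mem_filter, Finset.mem_product, Finset.mem_Icc] at hq
    have : q.1 * q.2 / q.1 = q.2 := Nat.mul_div_cancel_left q.2 hq.1.1.1
    cases q
    simp_all
  · intro σ hσ
    simp only [Finset.mem_sigma, Finset.mem_Icc, Nat.mem_divisors] at hσ
    obtain ⟨_, hdvd, _⟩ := hσ
    rcases σ with ⟨j, d⟩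
    simp [Nat.mul_div_cancel' hdvd]
  · intro q _
    rfl

/-- `p'_m(n)`: the number of partitions of `n` into parts ≡ 0, 1, or m-1 (mod m). -/
def pm (m n : ℕ) : ℕ :=
  restrictedPartitionCount (fun i => i % m = 0 ∨ i % m = 1 ∨ i % m = m - 1) n


lemma restrictedPartitionCount_zero (P : ℕ → Prop) [DecidablePred P] :
    restrictedPartitionCount P 0 = 1 := by
  rw [restrictedPartitionCount, Fintype.card_eq_one_iff]
  refine ⟨⟨⟨0, fun h => absurd h (Multiset.notMem_zero _), rfl⟩,
    fun i hi => absurd hi (Multiset.notMem_zero _)⟩, ?_⟩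
  rintro ⟨q, hq⟩
  apply Subtype.ext
  apply Nat.Partition.ext
  have hz : ∀ i ∈ q.parts, i = 0 := Multiset.sum_eq_zero_iff.mp q.parts_sum
  refine Multiset.eq_zero_of_forall_notMem fun i hi => ?_
  have h1 := q.parts_pos hi
  have h2 := hz i hi
  omega

lemma bell_main (m : ℕ) : ∀ n : ℕ,
    bellComplete (fun j => ((j - 1).factorial : ℚ) * sigma' m j) n =
      (n.factorial : ℚ) * pm m n := by
  intro n
  induction n using Nat.strong_induction_on with
  | _ n ih =>
    match n with
    | 0 =>
      rw [pm, restrictedPartitionCount_zero]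
      simp [bellComplete]
    | Nat.succ n =>
      rw [bellComplete_rec]
      calc ∑ i ∈ Finset.range (n + 1), (n.choose i : ℚ)
              * ((((i + 1) - 1).factorial : ℚ) * sigma' m (i + 1))
              * bellComplete (fun j => ((j - 1).factorial : ℚ) * sigma' m j) (n - i)
          = ∑ i ∈ Finset.range (n + 1),
              (n.factorial : ℚ) * ((sigma' m (i + 1) : ℚ) * (pm m (n - i) : ℚ)) := by
            refine Finset.sum_congr rfl fun i hi => ?_
            rw [Finset.mem_range] at hi
            rw [ih (n - i) (by omega)]
            have h1 : i + 1 - 1 = i := rfl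
            rw [h1]
            have h2 : (n.choose i) * i.factorial * (n - i).factorial = n.factorial :=
              Nat.choose_mul_factorial_mul_factorial (by omega)
            push_cast [← h2]
            ring
        _ = (n.factorial : ℚ)
              * ∑ i ∈ Finset.range (n + 1), ((sigma' m (i + 1) : ℚ) * (pm m (n - i) : ℚ)) := by
            rw [Finset.mul_sum]
        _ = (n.factorial : ℚ) * (((n : ℚ) + 1) * (pm m (n + 1) : ℚ)) := by
            congr 1
            have key : (n + 1) * pm m (n + 1)
                = ∑ j ∈ Finset.Icc 1 (n + 1), sigma' m j * pm m (n + 1 - j) :=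
              partition_recurrence (fun i => i % m = 0 ∨ i % m = 1 ∨ i % m = m - 1) (n + 1)
            have key' : ((n : ℚ) + 1) * (pm m (n + 1) : ℚ)
                = ∑ j ∈ Finset.Icc 1 (n + 1), (sigma' m j : ℚ) * (pm m (n + 1 - j) : ℚ) := by
              exact_mod_cast key
            rw [key', sum_Icc_one_eq_range (fun j => (sigma' m j : ℚ) * (pm m (n + 1 - j) : ℚ))
              (n + 1)]
            refine (Finset.sum_congr rfl fun i hi => ?_).symm
            rw [Finset.mem_range] at hi
            rw [Nat.add_comm 1 i]
            have harith : n + 1 - (i + 1) = n - i := by omega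
            rw [harith]
        _ = ((n + 1).factorial : ℚ) * pm m (n + 1) := by
            rw [Nat.factorial_succ]
            push_cast
            ring

theorem bell_complete_eq_partitions (m : ℕ) (hm : 3 ≤ m) (n : ℕ) (hn : 1 ≤ n) :
    bellComplete (fun j => ((j - 1).factorial : ℚ) * sigma' m j) n =
      (n.factorial : ℚ) * pm m n := by
  exact bell_main m n
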